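/- Let Λ̂, Λ̄₀ be d×d symmetric matrices with Λ̂ positive definite, let Φ̄ ∈ ℝ^{N×d}, Φ ∈ ℝ^{N×d}, γ > 0, and B = γΛ̂⁻¹ΦᵀΦ̄. Suppose ‖Λ̂^{-1/2}Λ̄₀Λ̂^{-1/2}‖₂ ≤ a, ‖ΦΛ̂⁻¹Φᵀ‖₂ ≤ 1, and ‖Λ̂^{-1/2}Φ̄ᵀΦ̄Λ̂^{-1/2}‖₂ ≤ b. Then for every i ≥ 0 and v ∈ ℝ^d, ‖B^i Λ̂^{-1/2} v‖²_{Λ̄₀} ≤ γ^{2i}·a·b^i·‖v‖₂², where ‖x‖²_{Λ̄₀} = xᵀΛ̄₀x. -/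

import Mathlib

open Matrix
open scoped RealInnerProductSpace

set_option maxHeartbeats 1000000

noncomputable def Matrix.PosSemidef.sqrt {n : Type*} [Fintype n] [DecidableEq n] {𝕜 : Type*}
    [RCLike 𝕜] [PartialOrder 𝕜] {A : Matrix n n 𝕜} (hA : A.PosSemidef) : Matrix n n 𝕜 :=
  hA.1.eigenvectorUnitary.1 * diagonal ((↑) ∘ (√·) ∘ hA.1.eigenvalues) *
    (star hA.1.eigenvectorUnitary : Matrix n n 𝕜)
noncomputable def matSpectralNorm {n : ℕ} (A : Matrix (Fin n) (Fin n) ℝ) : ℝ :=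
  ‖Matrix.toEuclideanCLM (𝕜 := ℝ) A‖

lemma psd_sqrt_mul_self_real {d : ℕ} {A : Matrix (Fin d) (Fin d) ℝ} (hA : A.PosSemidef) :
    hA.sqrt * hA.sqrt = A := by
  have hU : (star hA.1.eigenvectorUnitary : Matrix (Fin d) (Fin d) ℝ) *
      hA.1.eigenvectorUnitary.1 = 1 := Unitary.coe_star_mul_self _
  have hD : diagonal ((RCLike.ofReal : ℝ → ℝ) ∘ (√·) ∘ hA.1.eigenvalues) *
      diagonal ((RCLike.ofReal : ℝ → ℝ) ∘ (√·) ∘ hA.1.eigenvalues)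
      = diagonal ((RCLike.ofReal : ℝ → ℝ) ∘ hA.1.eigenvalues) := by
    rw [diagonal_mul_diagonal]
    congr 1; funext i
    simp [Real.mul_self_sqrt (hA.eigenvalues_nonneg i)]
  conv_rhs => rw [hA.1.spectral_theorem, Unitary.conjStarAlgAut_apply]
  unfold Matrix.PosSemidef.sqrt
  calc _ = hA.1.eigenvectorUnitary.1 * diagonal ((RCLike.ofReal : ℝ → ℝ) ∘ (√·) ∘ hA.1.eigenvalues) *
      ((star hA.1.eigenvectorUnitary : Matrix (Fin d) (Fin d) ℝ) * hA.1.eigenvectorUnitary.1) *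
      diagonal ((RCLike.ofReal : ℝ → ℝ) ∘ (√·) ∘ hA.1.eigenvalues) *
      (star hA.1.eigenvectorUnitary : Matrix (Fin d) (Fin d) ℝ) := by simp only [Matrix.mul_assoc]
    _ = _ := by rw [hU, Matrix.mul_one, Matrix.mul_assoc _ (diagonal _) (diagonal _), hD]

lemma psd_sqrt_isHermitian_real {d : ℕ} {A : Matrix (Fin d) (Fin d) ℝ} (hA : A.PosSemidef) :
    hA.sqrt.IsHermitian := by
  unfold Matrix.PosSemidef.sqrt Matrix.IsHermitian
  rw [conjTranspose_mul, conjTranspose_mul, diagonal_conjTranspose]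
  simp [Matrix.mul_assoc, Matrix.star_eq_conjTranspose]

lemma quad_bound {n : ℕ} (A : Matrix (Fin n) (Fin n) ℝ) (x : Fin n → ℝ) :
    x ⬝ᵥ A.mulVec x ≤ matSpectralNorm A * (x ⬝ᵥ x) := by
  set x' : EuclideanSpace ℝ (Fin n) := (WithLp.equiv _ _).symm x with hx'
  have h1 : x ⬝ᵥ A.mulVec x = ⟪x', (Matrix.toEuclideanCLM (𝕜 := ℝ) A) x'⟫ := by
    rw [inner_toEuclideanCLM]; rfl
  have h2 : x ⬝ᵥ x = ‖x'‖ ^ 2 := by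
    rw [← real_inner_self_eq_norm_sq]; rfl
  rw [h1, h2]
  calc ⟪x', (Matrix.toEuclideanCLM (𝕜 := ℝ) A) x'⟫
      ≤ ‖x'‖ * ‖(Matrix.toEuclideanCLM (𝕜 := ℝ) A) x'‖ := real_inner_le_norm _ _
    _ ≤ ‖x'‖ * (matSpectralNorm A * ‖x'‖) := by
        gcongr; exact ContinuousLinearMap.le_opNorm _ _
    _ = matSpectralNorm A * ‖x'‖ ^ 2 := by ring

lemma matSpectralNorm_nonneg {n : ℕ} (A : Matrix (Fin n) (Fin n) ℝ) : 0 ≤ matSpectralNorm A :=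
  norm_nonneg _

lemma key_dot {m n : ℕ} (A : Matrix (Fin m) (Fin n) ℝ) (C : Matrix (Fin m) (Fin m) ℝ)
    (u : Fin n → ℝ) :
    (A.mulVec u) ⬝ᵥ (C.mulVec (A.mulVec u)) = u ⬝ᵥ ((A.transpose * C * A).mulVec u) := by
  rw [← Matrix.mulVec_mulVec, ← Matrix.mulVec_mulVec]
  conv_rhs => rw [Matrix.dotProduct_mulVec, Matrix.vecMul_transpose]

lemma key_dot2 {m n : ℕ} (A : Matrix (Fin m) (Fin n) ℝ) (u : Fin n → ℝ) :
    (A.mulVec u) ⬝ᵥ (A.mulVec u) = u ⬝ᵥ ((A.transpose * A).mulVec u) := by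
  have h := key_dot A 1 u
  rw [Matrix.one_mulVec, Matrix.mul_one] at h
  exact h

lemma dot_self_nonneg {n : ℕ} (u : Fin n → ℝ) : 0 ≤ u ⬝ᵥ u :=
  Finset.sum_nonneg fun i _ => mul_self_nonneg _

/-- Contraction bound: if ‖Λ̂^{-1/2}Λ̄₀Λ̂^{-1/2}‖₂ ≤ a, ‖ΦΛ̂⁻¹Φᵀ‖₂ ≤ 1 and
‖Λ̂^{-1/2}Φ̄ᵀΦ̄Λ̂^{-1/2}‖₂ ≤ b, then for B = γΛ̂⁻¹ΦᵀΦ̄ we have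
‖BⁱΛ̂^{-1/2}v‖²_{Λ̄₀} ≤ γ^{2i}·a·bⁱ·‖v‖₂². -/
theorem contraction_bound {N d : ℕ} (Λh Λ₀ : Matrix (Fin d) (Fin d) ℝ)
    (hΛh : Λh.PosDef) (hΛ₀ : Λ₀.PosSemidef)
    (Φ Φb : Matrix (Fin N) (Fin d) ℝ) (γ : ℝ) (hγ : 0 < γ)
    (a b : ℝ)
    (ha : matSpectralNorm ((hΛh.posSemidef.sqrt)⁻¹ * Λ₀ * (hΛh.posSemidef.sqrt)⁻¹) ≤ a)
    (h1 : matSpectralNorm (Φ * Λh⁻¹ * Φ.transpose) ≤ 1)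
    (hb : matSpectralNorm ((hΛh.posSemidef.sqrt)⁻¹ * (Φb.transpose * Φb) * (hΛh.posSemidef.sqrt)⁻¹) ≤ b)
    (B : Matrix (Fin d) (Fin d) ℝ) (hB : B = γ • (Λh⁻¹ * Φ.transpose * Φb)) :
    ∀ (i : ℕ) (v : Fin d → ℝ),
      ((B ^ i * (hΛh.posSemidef.sqrt)⁻¹).mulVec v) ⬝ᵥ
          Λ₀.mulVec ((B ^ i * (hΛh.posSemidef.sqrt)⁻¹).mulVec v)
        ≤ γ ^ (2 * i) * a * b ^ i * (v ⬝ᵥ v) := by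
  set S := hΛh.posSemidef.sqrt with hS
  set T := S⁻¹ with hT
  have hSS : S * S = Λh := psd_sqrt_mul_self_real hΛh.posSemidef
  have hUS : IsUnit S.det := by
    have : IsUnit (S.det * S.det) := by
      rw [← Matrix.det_mul, hSS]; exact hΛh.isUnit.map Matrix.detMonoidHom
    exact isUnit_of_mul_isUnit_left this
  have hST : S * T = 1 := Matrix.mul_nonsing_inv S hUS
  have hTS : T * S = 1 := Matrix.nonsing_inv_mul S hUS
  have hSsym : S.transpose = S := by
    have := psd_sqrt_isHermitian_real hΛh.posSemidef
    simpa [Matrix.IsHermitian, Matrix.conjTranspose_eq_transpose_of_trivial] using this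
  have hTsym : T.transpose = T := by
    rw [hT, Matrix.transpose_nonsing_inv, hSsym]
  have hTT : T * T = Λh⁻¹ := by
    rw [hT, ← Matrix.mul_inv_rev, hSS]
  set M := T * Φ.transpose * Φb * T with hM
  have hb0 : 0 ≤ b := le_trans (matSpectralNorm_nonneg _) hb
  have ha0 : 0 ≤ a := le_trans (matSpectralNorm_nonneg _) ha
  -- one-step contraction
  have hstep : ∀ w : Fin d → ℝ, (M.mulVec w) ⬝ᵥ (M.mulVec w) ≤ b * (w ⬝ᵥ w) := by
    intro w
    set u := (Φb * T).mulVec w with hu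
    have hMw : M.mulVec w = (T * Φ.transpose).mulVec u := by
      rw [hu, Matrix.mulVec_mulVec, hM, Matrix.mul_assoc]
    have e1 : (M.mulVec w) ⬝ᵥ (M.mulVec w)
        = u ⬝ᵥ ((Φ * Λh⁻¹ * Φ.transpose).mulVec u) := by
      rw [hMw, key_dot2]
      congr 2
      rw [Matrix.transpose_mul, hTsym, Matrix.transpose_transpose]
      rw [show Φ * T * (T * Φ.transpose) = Φ * (T * T) * Φ.transpose by
        simp [Matrix.mul_assoc], hTT]
    have e2 : u ⬝ᵥ u = w ⬝ᵥ ((T * (Φb.transpose * Φb) * T).mulVec w) := by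
      rw [hu, key_dot2]
      congr 2
      rw [Matrix.transpose_mul, hTsym]
      rw [show T * Φb.transpose * (Φb * T) = T * (Φb.transpose * Φb) * T by
        simp [Matrix.mul_assoc]]
    calc (M.mulVec w) ⬝ᵥ (M.mulVec w)
        = u ⬝ᵥ ((Φ * Λh⁻¹ * Φ.transpose).mulVec u) := e1
      _ ≤ matSpectralNorm (Φ * Λh⁻¹ * Φ.transpose) * (u ⬝ᵥ u) := quad_bound _ _
      _ ≤ 1 * (u ⬝ᵥ u) := by gcongr; exact dot_self_nonneg u
      _ = w ⬝ᵥ ((T * (Φb.transpose * Φb) * T).mulVec w) := by rw [one_mul, e2]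
      _ ≤ matSpectralNorm (T * (Φb.transpose * Φb) * T) * (w ⬝ᵥ w) := quad_bound _ _
      _ ≤ b * (w ⬝ᵥ w) := by gcongr; exact dot_self_nonneg w
  -- iterated contraction
  have hiter : ∀ (i : ℕ) (v : Fin d → ℝ),
      ((M ^ i).mulVec v) ⬝ᵥ ((M ^ i).mulVec v) ≤ b ^ i * (v ⬝ᵥ v) := by
    intro i
    induction i with
    | zero => intro v; simp [Matrix.one_mulVec]
    | succ i ih =>
        intro v
        have : (M ^ (i + 1)).mulVec v = M.mulVec ((M ^ i).mulVec v) := by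
          rw [Matrix.mulVec_mulVec, pow_succ']
        rw [this]
        calc (M.mulVec ((M ^ i).mulVec v)) ⬝ᵥ (M.mulVec ((M ^ i).mulVec v))
            ≤ b * (((M ^ i).mulVec v) ⬝ᵥ ((M ^ i).mulVec v)) := hstep _
          _ ≤ b * (b ^ i * (v ⬝ᵥ v)) := by
              have := ih v
              nlinarith [dot_self_nonneg ((M ^ i).mulVec v)]
          _ = b ^ (i + 1) * (v ⬝ᵥ v) := by ring
  -- B^i * T = γ^i • (T * M^i)
  have hBi : ∀ i : ℕ, B ^ i * T = γ ^ i • (T * M ^ i) := by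
    intro i
    have hBTMS : B = γ • (T * M * S) := by
      rw [hB, hM]
      congr 1
      rw [show T * (T * Φ.transpose * Φb * T) * S
          = T * T * Φ.transpose * Φb * (T * S) by simp [Matrix.mul_assoc], hTS,
        Matrix.mul_one, hTT]
    have key : ∀ j : ℕ, B ^ j = γ ^ j • (T * M ^ j * S) := by
      intro j
      induction j with
      | zero => simp [hTS]
      | succ j ihj =>
          rw [pow_succ, ihj, hBTMS, Matrix.smul_mul, Matrix.mul_smul, smul_smul, pow_succ]
          congr 1
          rw [show T * M ^ j * S * (T * M * S) = T * M ^ j * (S * T) * M * S by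
            simp [Matrix.mul_assoc], hST, Matrix.mul_one]
          simp [pow_succ, Matrix.mul_assoc]
    rw [key i, Matrix.smul_mul, show T * M ^ i * S * T = T * M ^ i * (S * T) by
      simp [Matrix.mul_assoc], hST, Matrix.mul_one]
  -- conclusion
  intro i v
  rw [hBi i]
  set y := (M ^ i).mulVec v with hy
  have hx : (γ ^ i • (T * M ^ i)).mulVec v = γ ^ i • (T.mulVec y) := by
    rw [Matrix.smul_mulVec, ← Matrix.mulVec_mulVec, hy]
  rw [hx]
  have expand : (γ ^ i • T.mulVec y) ⬝ᵥ Λ₀.mulVec (γ ^ i • T.mulVec y)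
      = γ ^ (2 * i) * ((T.mulVec y) ⬝ᵥ Λ₀.mulVec (T.mulVec y)) := by
    rw [Matrix.mulVec_smul, smul_dotProduct, dotProduct_smul, smul_smul,
      ← pow_add, two_mul, smul_eq_mul]
  rw [expand]
  have hquad : (T.mulVec y) ⬝ᵥ Λ₀.mulVec (T.mulVec y) ≤ a * (y ⬝ᵥ y) := by
    have h := key_dot T Λ₀ y
    rw [h, hTsym]
    calc y ⬝ᵥ ((T * Λ₀ * T).mulVec y)
        ≤ matSpectralNorm (T * Λ₀ * T) * (y ⬝ᵥ y) := quad_bound _ _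
      _ ≤ a * (y ⬝ᵥ y) := by gcongr; exact dot_self_nonneg y
  have h2 : (T.mulVec y) ⬝ᵥ Λ₀.mulVec (T.mulVec y) ≤ a * (b ^ i * (v ⬝ᵥ v)) :=
    le_trans hquad (mul_le_mul_of_nonneg_left (hiter i v) ha0)
  have h0 : (0:ℝ) ≤ γ ^ (2 * i) := pow_nonneg hγ.le _
  calc γ ^ (2 * i) * ((T.mulVec y) ⬝ᵥ Λ₀.mulVec (T.mulVec y))
      ≤ γ ^ (2 * i) * (a * (b ^ i * (v ⬝ᵥ v))) := mul_le_mul_of_nonneg_left h2 h0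
    _ = γ ^ (2 * i) * a * b ^ i * (v ⬝ᵥ v) := by ring
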